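/- Let T be the functor on sets defined (up to the evident coproduct encoding) by T X = (X × List ℕ) ⊕ Stream ℕ, with unit η x = inl (x, []) and Kleisli extension f* given for f : X → TY by: f*(inl (x, τ)) = inl (y, τ ++ τ') if f x = inl (y, τ'); f*(inl (x, τ)) = inr (τ ++ π) if f x = inr π; and f*(inr π) = inr π. Call f : X → T(Y ⊕ X) guarded if whenever f x = inl (inr x', τ) then τ ≠ []. Then for every guarded f : X → T(Y ⊕ X) there exists a unique g : X → TY satisfying the fixpoint law g = [η, g]* ∘ f, i.e. for all x: if f x = inl (inl y, τ) then g x = inl (y, τ); if f x = inl (inr x', τ) then g x = inl (y', τ ++ τ') when g x' = inl (y', τ') and g x = inr (τ ++ π) when g x' = inr π; and if f x = inr π then g x = inr π. Explicitly, g x is computed by following the sequence x = x₀, x₁, x₂, … with f xᵢ = inl (inr xᵢ₊₁, τᵢ₊₁): if the sequence terminates with f xₙ = inl (inl y, τₙ₊₁) then g x = inl (y, τ₁ ++ ⋯ ++ τₙ₊₁); if it terminates with f xₙ = inr π then g x = inr (τ₁ ++ ⋯ ++ τₙ ++ π); and if it is infinite then g x = inr (τ₁ ++ τ₂ ++ ⋯),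 which is an infinite stream since guardedness makes each τᵢ nonempty. -/

import Mathlib

/-- The monad `T X = (X × List ℕ) ⊕ Stream' ℕ` of finite-trace values and
infinite traces. -/
def TT (X : Type) : Type :=
  (X × List ℕ) ⊕ Stream' ℕ

/-- The unit: `η x = inl (x, [])`. -/
def ηT {X : Type} (x : X) : TT X :=
  Sum.inl (x, [])

/-- The Kleisli extension of `f : X → TT Y`. -/
def bindT {X Y : Type} (f : X → TT Y) : TT X → TT Y
  | Sum.inl (x, τ) =>
      match f x with
      | Sum.inl (y, τ') => Sum.inl (y, τ ++ τ')
      | Sum.inr π => Sum.inr (Stream'.appendStream' τ π)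
  | Sum.inr π => Sum.inr π

/-- `f : X → T(Y ⊕ X)` is guarded if every continuation-state is preceded by a
nonempty output trace. -/
def guardedT {X Y : Type} (f : X → TT (Y ⊕ X)) : Prop :=
  ∀ x x' τ, f x = Sum.inl (Sum.inr x', τ) → τ ≠ []

/-- The trace `t 0 ++ ⋯ ++ t (n-1)` collected in the first `n` iteration
steps. -/
def traceUpTo (t : ℕ → List ℕ) (n : ℕ) : List ℕ :=
  ((List.range n).map t).flatten

namespace UGI

lemma traceUpTo_succ (t : ℕ → List ℕ) (n : ℕ) :
    traceUpTo t (n+1) = traceUpTo t n ++ t n := by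
  simp [traceUpTo, List.range_succ]

variable {X Y : Type}
def preT (τ : List ℕ) : TT Y → TT Y
  | Sum.inl (y, σ) => Sum.inl (y, τ ++ σ)
  | Sum.inr π => Sum.inr (Stream'.appendStream' τ π)


lemma preT_nil (r : TT Y) : preT [] r = r := by
  rcases r with ⟨y, σ⟩ | π
  · simp [preT]; rfl
  · simp [preT, Stream'.nil_append_stream]; rfl

lemma preT_preT (a b : List ℕ) (r : TT Y) : preT a (preT b r) = preT (a ++ b) r := by
  rcases r with ⟨y, σ⟩ | π
  · simp [preT]; rfl
  · simp [preT, Stream'.append_append_stream]; rfl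

lemma bindT_inl (h : X → TT Y) (z : X) (τ : List ℕ) :
    bindT h (Sum.inl (z, τ)) = preT τ (h z) := by
  rcases hz : h z with ⟨y, σ⟩ | π
  · simp [bindT, hz, preT]; rfl
  · simp [bindT, hz, preT]; rfl

lemma bindT_inr (h : X → TT Y) (π : Stream' ℕ) :
    bindT h (Sum.inr π) = Sum.inr π := rfl

variable (f : X → TT (Y ⊕ X))


def run : ℕ → X → (List ℕ × X) ⊕ TT Y
  | 0, x => Sum.inl ([], x)
  | n+1, x =>
    match run n x with
    | Sum.inl (a, z) =>
      match f z with
      | Sum.inl (Sum.inl y, τ) => Sum.inr (Sum.inl (y, a ++ τ))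
      | Sum.inl (Sum.inr z', τ) => Sum.inl (a ++ τ, z')
      | Sum.inr π => Sum.inr (Sum.inr (Stream'.appendStream' a π))
    | Sum.inr r => Sum.inr r

variable {f}

lemma run_succ_of_inr {n : ℕ} {x : X} {r : TT Y} (h : run f n x = Sum.inr r) :
    run f (n+1) x = Sum.inr r := by
  simp [run, h]

lemma run_succ_inl_inl {n : ℕ} {x z : X} {a τ : List ℕ} {y : Y}
    (h1 : run f n x = Sum.inl (a, z)) (h2 : f z = Sum.inl (Sum.inl y, τ)) :
    run f (n+1) x = Sum.inr (Sum.inl (y, a ++ τ)) := by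
  simp [run, h1, h2]; rfl

lemma run_succ_inl_inr {n : ℕ} {x z z' : X} {a τ : List ℕ}
    (h1 : run f n x = Sum.inl (a, z)) (h2 : f z = Sum.inl (Sum.inr z', τ)) :
    run f (n+1) x = Sum.inl (a ++ τ, z') := by
  simp [run, h1, h2]

lemma run_succ_inl_str {n : ℕ} {x z : X} {a : List ℕ} {π : Stream' ℕ}
    (h1 : run f n x = Sum.inl (a, z)) (h2 : f z = Sum.inr π) :
    run f (n+1) x = Sum.inr (Sum.inr (Stream'.appendStream' a π)) := by
  simp [run, h1, h2]; rfl

lemma run_succ_inv {n : ℕ} {x z' : X} {a' : List ℕ}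
    (h : run f (n+1) x = Sum.inl (a', z')) :
    ∃ a z τ, run f n x = Sum.inl (a, z) ∧ f z = Sum.inl (Sum.inr z', τ) ∧ a' = a ++ τ := by
  rcases hn : run f n x with ⟨a, z⟩ | r
  · rcases hz : f z with ⟨y | w, τ⟩ | π
    · rw [run_succ_inl_inl hn hz] at h; exact absurd h (by simp)
    · rw [run_succ_inl_inr hn hz] at h
      injection h with h; injection h with h1 h2
      subst h2
      refine ⟨a, z, τ, ?_, ?_, ?_⟩
      · exact hn ▸ rfl
      · exact hz
      · exact h1.symm
    · rw [run_succ_inl_str hn hz] at h; exact absurd h (by simp)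
  · rw [run_succ_of_inr hn] at h; exact absurd h (by simp)

lemma run_le {n m : ℕ} (hnm : n ≤ m) {x : X} {r : TT Y} (h : run f n x = Sum.inr r) :
    run f m x = Sum.inr r := by
  induction m with
  | zero =>
      have : n = 0 := Nat.le_zero.mp hnm
      exact this ▸ h
  | succ m ih =>
      rcases Nat.lt_or_ge n (m+1) with hlt | hge
      · exact run_succ_of_inr (ih (Nat.lt_succ_iff.mp hlt))
      · have : n = m + 1 := le_antisymm hnm hge
        exact this ▸ h

lemma run_inr_unique {n m : ℕ} {x : X} {r r' : TT Y}
    (h : run f n x = Sum.inr r) (h' : run f m x = Sum.inr r') : r = r' := by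
  have h1 := run_le (Nat.le_max_left n m) h
  have h2 := run_le (Nat.le_max_right n m) h'
  rw [h1] at h2; exact (Sum.inr.inj h2)

lemma run_shift {x x' : X} {τ : List ℕ} (hx : f x = Sum.inl (Sum.inr x', τ)) (n : ℕ) :
    run f (n+1) x = Sum.map (fun p => (τ ++ p.1, p.2)) (preT τ) (run f n x') := by
  induction n with
  | zero =>
      rw [run_succ_inl_inr (by rfl) hx]
      simp [run]
  | succ n ih =>
      rcases hn : run f n x' with ⟨a, z⟩ | r
      · rw [hn] at ih
        rcases hz : f z with ⟨y | w, σ⟩ | π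
        · rw [run_succ_inl_inl hn hz, run_succ_inl_inl ih hz]
          simp [preT, List.append_assoc]; rfl
        · rw [run_succ_inl_inr hn hz, run_succ_inl_inr ih hz]
          simp [List.append_assoc]
        · rw [run_succ_inl_str hn hz, run_succ_inl_str ih hz]
          simp [preT, Stream'.append_append_stream]; rfl
      · rw [hn] at ih
        have h1 : run f (n+1) x = Sum.inr (preT τ r) := by rw [ih]; rfl
        rw [run_succ_of_inr h1, run_succ_of_inr hn]
        rfl

lemma run_length (hf : guardedT f) {n : ℕ} {x z : X} {a : List ℕ}
    (h : run f n x = Sum.inl (a, z)) : n ≤ a.length := by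
  induction n generalizing a z with
  | zero => exact Nat.zero_le _
  | succ n ih =>
      obtain ⟨a0, z0, τ, h1, h2, h3⟩ := run_succ_inv h
      have hτ : τ ≠ [] := hf _ _ _ h2
      have : 1 ≤ τ.length := Nat.one_le_iff_ne_zero.mpr (by simpa using hτ)
      have := ih h1
      simp [h3]; omega

lemma run_prefix {x : X} {m : ℕ} : ∀ {d : ℕ} {a a' : List ℕ} {z z' : X},
    run f m x = Sum.inl (a, z) → run f (m + d) x = Sum.inl (a', z') → a <+: a'
  | 0, a, a', z, z', h, h' => by
      rw [Nat.add_zero, h] at h'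
      injection h' with h'; injection h' with h1 h2
      exact h1 ▸ List.prefix_refl a
  | d+1, a, a', z, z', h, h' => by
      obtain ⟨a0, z0, τ, h1, h2, h3⟩ := run_succ_inv h'
      exact (run_prefix h h1).trans (h3 ▸ List.prefix_append a0 τ)

-- appended to run.lean content (namespace UGI still open in combined file)

/-- get of appendStream' -/
lemma get_append_stream (l : List ℕ) (s : Stream' ℕ) (k : ℕ) :
    (Stream'.appendStream' l s).get k =
      if k < l.length then l.getD k 0 else s.get (k - l.length) := by
  induction l generalizing k with
  | nil => simp [Stream'.nil_append_stream]
  | cons b l ih =>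
      rw [Stream'.cons_append_stream]
      cases k with
      | zero => simp [Stream'.get_zero_cons]
      | succ k =>
          rw [Stream'.get_succ_cons, ih]
          simp only [List.length_cons, Nat.succ_lt_succ_iff, List.getD_cons_succ,
            Nat.succ_sub_succ]

lemma take_append_stream (l : List ℕ) (s : Stream' ℕ) :
    Stream'.take l.length (Stream'.appendStream' l s) = l := by
  induction l with
  | nil => rfl
  | cons b l ih => rw [Stream'.cons_append_stream]; simp [ih]

lemma getD_take {s : Stream' ℕ} {k n : ℕ} (h : k < n) :
    (Stream'.take n s).getD k 0 = s.get k := by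
  rw [List.getD_eq_getElem?_getD, Stream'.getElem?_take h]
  rfl

lemma getD_prefix {l l' : List ℕ} (h : l <+: l') {k : ℕ} (hk : k < l.length) :
    l.getD k 0 = l'.getD k 0 := by
  obtain ⟨s, rfl⟩ := h
  rw [List.getD_append _ _ _ _ hk]

open Classical in
noncomputable def gdef (f : X → TT (Y ⊕ X)) (x : X) : TT Y :=
  if h : ∃ n r, run f n x = Sum.inr r then h.choose_spec.choose
  else Sum.inr (fun k =>
    Sum.elim (fun p => p.1.getD k 0) (fun _ => 0) (run f (k+1) x))

lemma gdef_run_inr {n : ℕ} {x : X} {r : TT Y} (h : run f n x = Sum.inr r) :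
    gdef f x = r := by
  have hex : ∃ n r, run f n x = Sum.inr r := ⟨n, r, h⟩
  rw [gdef]
  exact (dif_pos hex).trans (run_inr_unique hex.choose_spec.choose_spec h)

lemma gdef_not_inr {x : X} (h : ¬ ∃ n r, run f n x = Sum.inr r) :
    gdef f x = Sum.inr (fun k =>
      Sum.elim (fun p => p.1.getD k 0) (fun _ => 0) (run f (k+1) x)) := by
  rw [gdef]
  exact dif_neg h

lemma run_all_inl {x : X} (h : ¬ ∃ n r, run f n x = Sum.inr r) (n : ℕ) :
    ∃ a z, run f n x = Sum.inl (a, z) := by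
  rcases hn : run f n x with ⟨a, z⟩ | r
  · exact ⟨a, z, rfl⟩
  · exact absurd ⟨n, r, hn⟩ h

/-- The fixpoint law for `gdef`. -/
lemma gdef_law (hf : guardedT f) (x : X) :
    gdef f x = bindT (Sum.elim ηT (gdef f)) (f x) := by
  rcases hx : f x with ⟨y | x', τ⟩ | π
  · -- terminal value
    have h1 : run f 1 x = Sum.inr (Sum.inl (y, τ)) := by
      have := run_succ_inl_inl (f := f) (n := 0) (x := x) rfl hx
      simpa using this
    rw [gdef_run_inr h1, bindT_inl]
    simp [preT, ηT]; rfl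
  · -- continuation
    have key : ∀ n, run f (n+1) x
        = Sum.map (fun p => (τ ++ p.1, p.2)) (preT τ) (run f n x') := run_shift hx
    rw [bindT_inl]
    simp only [Sum.elim_inr]
    by_cases h' : ∃ n r, run f n x' = Sum.inr r
    · obtain ⟨n, r, hr⟩ := h'
      have : run f (n+1) x = Sum.inr (preT τ r) := by rw [key n, hr]; rfl
      rw [gdef_run_inr this, gdef_run_inr hr]
    · have hτ : τ ≠ [] := hf _ _ _ hx
      have hτ1 : 1 ≤ τ.length := by
        cases τ with
        | nil => exact absurd rfl hτ
        | cons b l => simp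
      have hx' : ¬ ∃ n r, run f n x = Sum.inr r := by
        rintro ⟨n, r, hn⟩
        cases n with
        | zero => exact absurd hn (by simp [run])
        | succ n =>
            rw [key n] at hn
            obtain ⟨a, z, ha⟩ := run_all_inl h' n
            rw [ha] at hn
            exact absurd hn (by simp)
      rw [gdef_not_inr hx', gdef_not_inr h']
      simp only [preT]
      congr 1
      apply Stream'.ext
      intro k
      obtain ⟨a, z, ha⟩ := run_all_inl h' k
      have hrx : run f (k+1) x = Sum.inl (τ ++ a, z) := by rw [key k, ha]; rfl
      show Sum.elim (fun p => p.1.getD k 0) (fun _ => 0) (run f (k+1) x) = _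
      rw [hrx]
      refine Eq.trans ?_ (get_append_stream _ _ _).symm
      simp only [Sum.elim_inl]
      by_cases hk : k < τ.length
      · rw [if_pos hk, List.getD_append _ _ _ _ hk]
      · rw [if_neg hk]
        push_neg at hk
        set j := k - τ.length with hj
        have hjk : j + 1 ≤ k := by omega
        obtain ⟨a', z', ha'⟩ := run_all_inl h' (j+1)
        show (τ ++ a).getD k 0 = Sum.elim (fun p => p.1.getD j 0) (fun _ => 0) (run f (j+1) x')
        rw [ha']
        simp only [Sum.elim_inl]
        rw [List.getD_append_right _ _ _ _ hk, ← hj]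
        have hlen : j + 1 ≤ a'.length := run_length hf ha'
        have hrw : run f (j + 1 + (k - (j+1))) x' = Sum.inl (a, z) := by
          rw [show j + 1 + (k - (j+1)) = k by omega]; exact ha
        have hpre : a' <+: a := run_prefix ha' hrw
        exact (getD_prefix hpre (by omega)).symm
  · -- immediate divergence
    have h1 : run f 1 x = Sum.inr (Sum.inr π) := by
      have := run_succ_inl_str (f := f) (n := 0) (x := x) rfl hx
      simpa [Stream'.nil_append_stream] using this
    rw [gdef_run_inr h1]
    rfl

section Laws

variable {g : X → TT Y} (hg : ∀ x, g x = bindT (Sum.elim ηT g) (f x))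

include hg

lemma law_run_inr : ∀ (n : ℕ) (x : X) (r : TT Y), run f n x = Sum.inr r → g x = r := by
  intro n
  induction n with
  | zero => intro x r h; exact absurd h (by simp [run])
  | succ n ih =>
      intro x r h
      rcases hx : f x with ⟨y | x', τ⟩ | π
      · have h1 : run f 1 x = Sum.inr (Sum.inl (y, τ)) := by
          have := run_succ_inl_inl (f := f) (n := 0) (x := x) rfl hx
          simpa using this
        have h2 := run_le (show 1 ≤ n+1 by omega) h1
        have hr : r = Sum.inl (y, τ) := run_inr_unique h h2
        rw [hg x, hx, bindT_inl, hr]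
        simp [preT, ηT]; rfl
      · rcases hn : run f n x' with ⟨a, z⟩ | r0
        · rw [run_shift hx n, hn] at h
          exact absurd h (by simp)
        · rw [run_shift hx n, hn] at h
          simp only [Sum.map_inr] at h
          have hr : r = preT τ r0 := (Sum.inr.inj h).symm
          rw [hg x, hx, bindT_inl, hr]
          simp only [Sum.elim_inr]
          rw [ih x' r0 hn]
      · have h1 : run f 1 x = Sum.inr (Sum.inr π) := by
          have := run_succ_inl_str (f := f) (n := 0) (x := x) rfl hx
          simpa [Stream'.nil_append_stream] using this
        have h2 := run_le (show 1 ≤ n+1 by omega) h1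
        have hr : r = Sum.inr π := run_inr_unique h h2
        rw [hg x, hx, bindT_inr, hr]

lemma law_pre : ∀ (n : ℕ) (x : X) (a : List ℕ) (z : X),
    run f n x = Sum.inl (a, z) → g x = preT a (g z) := by
  intro n
  induction n with
  | zero =>
      intro x a z h
      simp only [run] at h
      injection h with h; injection h with h1 h2
      rw [← h1, ← h2, preT_nil]
  | succ n ih =>
      intro x a z h
      obtain ⟨a0, z0, τ, h1, h2, h3⟩ := run_succ_inv h
      have hz0 : g z0 = preT τ (g z) := by rw [hg z0, h2, bindT_inl]; rfl
      rw [ih x a0 z0 h1, hz0, preT_preT, ← h3]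

lemma law_not_inl (hf : guardedT f) {x : X} (hne : ¬ ∃ n r, run f n x = Sum.inr r)
    (y : Y) (σ : List ℕ) : g x ≠ Sum.inl (y, σ) := by
  intro heq
  obtain ⟨a, z, ha⟩ := run_all_inl hne (σ.length + 1)
  have hlen : σ.length + 1 ≤ a.length := run_length hf ha
  have hx := law_pre hg _ x a z ha
  rcases hz : g z with ⟨y', σ'⟩ | ρ
  · rw [hz] at hx
    rw [heq] at hx
    simp only [preT] at hx
    injection hx with hx; injection hx with hx1 hx2
    have : σ.length = a.length + σ'.length := by rw [hx2]; simp
    omega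
  · rw [hz, heq] at hx
    simp [preT] at hx

lemma law_infinite (hf : guardedT f) {x : X} (hne : ¬ ∃ n r, run f n x = Sum.inr r) :
    ∃ π : Stream' ℕ, g x = Sum.inr π ∧
      ∀ n a z, run f n x = Sum.inl (a, z) → Stream'.take a.length π = a := by
  rcases hgx : g x with ⟨y, σ⟩ | π
  · exact absurd hgx (law_not_inl hg hf hne y σ)
  · refine ⟨π, rfl, ?_⟩
    intro n a z h
    have hx := law_pre hg n x a z h
    rcases hz : g z with ⟨y', σ'⟩ | ρ
    · rw [hz, hgx] at hx; simp [preT] at hx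
    · rw [hz, hgx] at hx
      simp only [preT] at hx
      rw [Sum.inr.inj hx, take_append_stream]

end Laws

lemma chain_run {u : ℕ → X} {t : ℕ → List ℕ} {n : ℕ}
    (h : ∀ i < n, f (u i) = Sum.inl (Sum.inr (u (i + 1)), t i)) :
    run f n (u 0) = Sum.inl (traceUpTo t n, u n) := by
  induction n with
  | zero => rfl
  | succ n ih =>
      have hn := ih (fun i hi => h i (Nat.lt_succ_of_lt hi))
      rw [run_succ_inl_inr hn (h n (Nat.lt_succ_self n)), traceUpTo_succ]

end UGI

open UGI

/-- For every guarded `f : X → T(Y ⊕ X)` there is a unique `g : X → T Y`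
satisfying the fixpoint law `g = [η, g]* ∘ f`.  Explicitly, `g x` is computed
by following the sequence `x = u 0, u 1, u 2, …` with
`f (u i) = inl (inr (u (i+1)), t i)`: if it terminates with
`f (u n) = inl (inl y, τ)` then `g x = inl (y, t 0 ++ ⋯ ++ t (n-1) ++ τ)`; if
it terminates with `f (u n) = inr π` then
`g x = inr (t 0 ++ ⋯ ++ t (n-1) ++ π)`; and if it is infinite then `g x` is
the infinite stream extending all the finite traces `t 0 ++ ⋯ ++ t (n-1)`
(an infinite stream, since guardedness makes each `t i` nonempty). -/
theorem unique_guarded_iteration {X Y : Type} (f : X → TT (Y ⊕ X))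
    (hf : guardedT f) :
    (∃! g : X → TT Y, g = fun x => bindT (Sum.elim ηT g) (f x))
    ∧ ∀ g : X → TT Y, (g = fun x => bindT (Sum.elim ηT g) (f x)) →
        ∀ (x : X) (u : ℕ → X) (t : ℕ → List ℕ), u 0 = x →
          (∀ (n : ℕ) (y : Y) (τ : List ℕ),
              (∀ i < n, f (u i) = Sum.inl (Sum.inr (u (i + 1)), t i)) →
              f (u n) = Sum.inl (Sum.inl y, τ) →
              g x = Sum.inl (y, traceUpTo t n ++ τ))
          ∧ (∀ (n : ℕ) (π : Stream' ℕ),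
              (∀ i < n, f (u i) = Sum.inl (Sum.inr (u (i + 1)), t i)) →
              f (u n) = Sum.inr π →
              g x = Sum.inr (Stream'.appendStream' (traceUpTo t n) π))
          ∧ ((∀ i, f (u i) = Sum.inl (Sum.inr (u (i + 1)), t i)) →
              ∃ π : Stream' ℕ, g x = Sum.inr π ∧
                ∀ n, Stream'.take (traceUpTo t n).length π = traceUpTo t n) := by
  constructor
  · refine ⟨gdef f, ?_, ?_⟩
    · funext x; exact gdef_law hf x
    · intro g' hg'
      have hg : ∀ x, g' x = bindT (Sum.elim ηT g') (f x) := fun x => congrFun hg' x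
      funext x
      by_cases h : ∃ n r, run f n x = Sum.inr r
      · obtain ⟨n, r, hr⟩ := h
        rw [law_run_inr hg n x r hr, gdef_run_inr hr]
      · obtain ⟨π, hπ, htake⟩ := law_infinite hg hf h
        have hglaw : ∀ x, gdef f x = bindT (Sum.elim ηT (gdef f)) (f x) := gdef_law hf
        obtain ⟨π', hπ', htake'⟩ := law_infinite hglaw hf h
        rw [hπ, hπ']
        congr 1
        apply Stream'.ext
        intro k
        obtain ⟨a, z, ha⟩ := run_all_inl h (k+1)
        have hlen : k + 1 ≤ a.length := run_length hf ha
        have e1 := htake (k+1) a z ha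
        have e2 := htake' (k+1) a z ha
        have g1 : π.get k = a.getD k 0 := by rw [← e1]; exact (getD_take (by omega)).symm
        have g2 : π'.get k = a.getD k 0 := by rw [← e2]; exact (getD_take (by omega)).symm
        rw [g1, g2]
  · intro g hg x u t hu
    have hglaw : ∀ x, g x = bindT (Sum.elim ηT g) (f x) := fun x => congrFun hg x
    refine ⟨?_, ?_, ?_⟩
    · intro n y τ hchain hterm
      have hrun : run f n (u 0) = Sum.inl (traceUpTo t n, u n) := chain_run hchain
      have hstep : run f (n+1) (u 0) = Sum.inr (Sum.inl (y, traceUpTo t n ++ τ)) :=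
        run_succ_inl_inl hrun hterm
      rw [← hu]
      exact law_run_inr hglaw (n+1) (u 0) _ hstep
    · intro n π hchain hterm
      have hrun : run f n (u 0) = Sum.inl (traceUpTo t n, u n) := chain_run hchain
      have hstep : run f (n+1) (u 0)
          = Sum.inr (Sum.inr (Stream'.appendStream' (traceUpTo t n) π)) :=
        run_succ_inl_str hrun hterm
      rw [← hu]
      exact law_run_inr hglaw (n+1) (u 0) _ hstep
    · intro hchain
      have hrun : ∀ n, run f n (u 0) = Sum.inl (traceUpTo t n, u n) :=
        fun n => chain_run (fun i _ => hchain i)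
      have hne : ¬ ∃ n r, run f n (u 0) = Sum.inr r := by
        rintro ⟨n, r, hr⟩; rw [hrun n] at hr; exact absurd hr (by simp)
      obtain ⟨π, hπ, htake⟩ := law_infinite hglaw hf hne
      rw [← hu]
      exact ⟨π, hπ, fun n => htake n _ _ (hrun n)⟩
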